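/- Let y_1,...,y_N ∈ ℝ^L and define C ∈ ℝ^{NL×NL} by C_{(i,k);(j,l)} = ⟨R_{-k} y_i, R_{-l} y_j⟩. Then the nonzero eigenvalues of C are exactly λ_k = L · Σ_{i=1}^N |F(y_i, k)|² for k ∈ ℤ_L (counted over those k for which λ_k > 0), where F denotes the (unitary) discrete Fourier transform. -/

import Mathlib

open Finset

/-- Unitary discrete Fourier transform of a real vector. -/
noncomputable def dftR {L : ℕ} [NeZero L] (x : ZMod L → ℝ) (k : ZMod L) : ℂ :=
  (1 / Real.sqrt L) * ∑ j : ZMod L, (x j : ℂ) *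
    Complex.exp (-(2 * (Real.pi : ℂ) * Complex.I * (j.val : ℂ) * (k.val : ℂ) / (L : ℂ)))

namespace Stmt2Aux

variable {L : ℕ} [NeZero L]

/-- unnormalized DFT -/
noncomputable def gg (x : ZMod L → ℝ) (k : ZMod L) : ℂ :=
  ∑ j : ZMod L, (x j : ℂ) * ZMod.stdAddChar (-(j * k))

lemma psi_conj (a : ZMod L) :
    (starRingEnd ℂ) (ZMod.stdAddChar a) = ZMod.stdAddChar (-a) := by
  rw [ZMod.stdAddChar_apply, ZMod.stdAddChar_apply, AddChar.map_neg_eq_inv,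
    ← Circle.coe_inv_eq_conj]

lemma orth (b : ZMod L) :
    ∑ x : ZMod L, ZMod.stdAddChar (x * b) = if b = 0 then (L : ℂ) else 0 := by
  simpa [ZMod.card] using AddChar.sum_mulShift b (ZMod.isPrimitive_stdAddChar L)

lemma psi_eq (j k : ZMod L) :
    ZMod.stdAddChar (-(j * k)) =
      Complex.exp (-(2 * (Real.pi : ℂ) * Complex.I * (j.val : ℂ) * (k.val : ℂ) / (L : ℂ))) := by
  have h : (-(j * k) : ZMod L) = ((-(j.val * k.val : ℤ) : ℤ) : ZMod L) := by
    push_cast [ZMod.natCast_zmod_val]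
    ring
  rw [h, ZMod.stdAddChar_coe]
  congr 1
  push_cast
  ring

lemma dftR_eq (x : ZMod L → ℝ) (k : ZMod L) :
    dftR x k = ((1 / Real.sqrt L : ℝ) : ℂ) * gg x k := by
  rw [dftR, gg]
  rw [Finset.sum_congr rfl fun j (_ : j ∈ Finset.univ) => by rw [← psi_eq (L := L) j k]]
  push_cast
  ring

lemma abs_dftR_sq (x : ZMod L → ℝ) (k : ZMod L) :
    ‖dftR x k‖ ^ 2 = Complex.normSq (gg x k) / L := by
  rw [dftR_eq, norm_mul, mul_pow, Complex.norm_real, Real.norm_eq_abs, Complex.sq_norm,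
    abs_of_nonneg (by positivity : (0:ℝ) ≤ 1 / Real.sqrt L), div_pow, one_pow,
    Real.sq_sqrt (Nat.cast_nonneg L)]
  ring

lemma conj_gg (x : ZMod L → ℝ) (k : ZMod L) :
    (starRingEnd ℂ) (gg x k) = ∑ j : ZMod L, (x j : ℂ) * ZMod.stdAddChar (j * k) := by
  rw [gg, map_sum]
  refine Finset.sum_congr rfl fun j _ => ?_
  rw [map_mul, Complex.conj_ofReal, psi_conj, neg_neg]


lemma hconv (x : ZMod L → ℝ) (c : ZMod L) :
    ∑ d : ZMod L, (∑ u : ZMod L, (x (d + u) : ℂ) * (x u : ℂ)) * ZMod.stdAddChar (d * c)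
      = (∑ j : ZMod L, (x j : ℂ) * ZMod.stdAddChar (j * c)) * gg x c := by
  rw [gg, Finset.sum_mul_sum]
  rw [Finset.sum_comm]
  simp only [Finset.sum_mul]
  rw [Finset.sum_comm]
  refine Finset.sum_congr rfl fun u _ => ?_
  rw [← Equiv.sum_comp (Equiv.subRight u)
    (fun d => (x (d + u) : ℂ) * (x u : ℂ) * ZMod.stdAddChar (d * c))]
  refine Finset.sum_congr rfl fun j _ => ?_
  simp only [Equiv.subRight_apply]
  rw [sub_add_cancel]
  have h2 : ((j - u) * c : ZMod L) = j * c + -(u * c) := by ring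
  rw [h2, AddChar.map_add_eq_mul]
  ring

lemma parseval (x : ZMod L → ℝ) :
    ∑ k : ZMod L, Complex.normSq (gg x k) = L * ∑ t : ZMod L, (x t) ^ 2 := by
  apply Complex.ofReal_injective
  push_cast
  have key : ∀ k : ZMod L, ((Complex.normSq (gg x k) : ℂ))
      = ∑ j : ZMod L, ∑ j' : ZMod L,
        (x j : ℂ) * (x j' : ℂ) * ZMod.stdAddChar (k * (j' - j)) := by
    intro k
    rw [← Complex.mul_conj, conj_gg, gg, Finset.sum_mul_sum]
    refine Finset.sum_congr rfl fun j _ => Finset.sum_congr rfl fun j' _ => ?_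
    have h2 : (j' * k + -(j * k) : ZMod L) = k * (j' - j) := by ring
    rw [← h2, AddChar.map_add_eq_mul]
    ring
  calc ∑ k : ZMod L, ((Complex.normSq (gg x k) : ℂ))
      = ∑ j : ZMod L, ∑ j' : ZMod L, (x j : ℂ) * (x j' : ℂ)
          * ∑ k : ZMod L, ZMod.stdAddChar (k * (j' - j)) := by
        simp only [key]
        rw [Finset.sum_comm]
        refine Finset.sum_congr rfl fun j _ => ?_
        rw [Finset.sum_comm]
        refine Finset.sum_congr rfl fun j' _ => ?_
        rw [Finset.mul_sum]
    _ = (L : ℂ) * ∑ t : ZMod L, (x t : ℂ) ^ 2 := by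
        simp only [orth, mul_ite, mul_zero, sub_eq_zero]
        rw [Finset.mul_sum]
        refine Finset.sum_congr rfl fun j _ => ?_
        rw [Finset.sum_ite_eq' Finset.univ j (fun j' => (x j : ℂ) * (x j' : ℂ) * L)]
        simp [sq]
        ring


lemma spec_iff_eigen {n K : Type*} [Fintype n] [DecidableEq n] [Field K]
    (M : Matrix n n K) (mu : K) :
    mu ∈ spectrum K M ↔ ∃ v, v ≠ 0 ∧ M.mulVec v = mu • v := by
  rw [spectrum.mem_iff, Matrix.isUnit_iff_isUnit_det, isUnit_iff_ne_zero, not_not,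
    ← Matrix.exists_mulVec_eq_zero_iff]
  have halg : ∀ v : n → K, (algebraMap K (Matrix n n K) mu).mulVec v = mu • v := by
    intro v
    rw [Algebra.algebraMap_eq_smul_one, Matrix.smul_mulVec, Matrix.one_mulVec]
  constructor
  · rintro ⟨v, hv, hv0⟩
    refine ⟨v, hv, ?_⟩
    rw [Matrix.sub_mulVec, halg, sub_eq_zero] at hv0
    exact hv0.symm
  · rintro ⟨v, hv, hv0⟩
    exact ⟨v, hv, by rw [Matrix.sub_mulVec, halg, hv0, sub_self]⟩

lemma spec_swap_aux {m n K : Type*} [Fintype m] [Fintype n] [DecidableEq m] [DecidableEq n]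
    [Field K] (A : Matrix m n K) (B : Matrix n m K) (mu : K) (hmu : mu ≠ 0)
    (h : mu ∈ spectrum K (A * B)) : mu ∈ spectrum K (B * A) := by
  rw [spec_iff_eigen] at h ⊢
  obtain ⟨v, hv, hev⟩ := h
  refine ⟨B.mulVec v, ?_, ?_⟩
  · intro h0
    have h1 : (A * B).mulVec v = 0 := by
      rw [← Matrix.mulVec_mulVec, h0, Matrix.mulVec_zero]
    rw [hev] at h1
    exact smul_ne_zero hmu hv h1
  · rw [Matrix.mulVec_mulVec, Matrix.mul_assoc, ← Matrix.mulVec_mulVec, hev, Matrix.mulVec_smul]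

lemma spec_ofReal {n : Type*} [Fintype n] [DecidableEq n] (M : Matrix n n ℝ) (mu : ℝ) :
    mu ∈ spectrum ℝ M ↔ (mu : ℂ) ∈ spectrum ℂ (M.map (Complex.ofReal)) := by
  rw [spectrum.mem_iff, spectrum.mem_iff, Matrix.isUnit_iff_isUnit_det,
    Matrix.isUnit_iff_isUnit_det, isUnit_iff_ne_zero, isUnit_iff_ne_zero]
  have hmap : algebraMap ℂ (Matrix n n ℂ) (mu : ℂ) - M.map (Complex.ofReal)
      = (algebraMap ℝ (Matrix n n ℝ) mu - M).map (Complex.ofRealHom) := by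
    ext i j
    simp [Matrix.algebraMap_matrix_apply, Matrix.map_apply, apply_ite]
  rw [hmap, ← RingHom.mapMatrix_apply, ← RingHom.map_det]
  simp [Complex.ofRealHom_eq_coe, Complex.ofReal_ne_zero]

end Stmt2Aux


/-- the nonzero eigenvalues of the shift Gram matrix `C` are exactly
the numbers `λ_k = L ⬝ Σᵢ |F(yᵢ,k)|²`, `k ∈ ℤ_L`; in particular `tr C = Σ_k λ_k`. -/
theorem stmt2 (N L : ℕ) [NeZero L] (y : Fin N → ZMod L → ℝ)
    (C : Matrix (Fin N × ZMod L) (Fin N × ZMod L) ℝ)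
    (hC : ∀ i j : Fin N, ∀ k l : ZMod L,
      C (i, k) (j, l) = ∑ t : ZMod L, y i (t + k) * y j (t + l))
    (lam : ZMod L → ℝ)
    (hlam : ∀ k : ZMod L, lam k = L * ∑ i : Fin N, ‖dftR (y i) k‖ ^ 2) :
    ({μ : ℝ | μ ≠ 0 ∧ μ ∈ spectrum ℝ C} = {μ : ℝ | μ ≠ 0 ∧ ∃ k : ZMod L, μ = lam k})
      ∧ C.trace = ∑ k : ZMod L, lam k := by
  classical
  have hL : (L : ℝ) ≠ 0 := Nat.cast_ne_zero.mpr (NeZero.ne L)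
  set A : Matrix (Fin N × ZMod L) (ZMod L) ℝ := Matrix.of (fun p t => y p.1 (t + p.2)) with hA
  have hCA : C = A * A.transpose := by
    ext ⟨i, k⟩ ⟨j, l⟩
    rw [hC i j k l]
    simp [hA, Matrix.mul_apply, Matrix.transpose_apply, Matrix.of_apply]
  set G : Matrix (ZMod L) (ZMod L) ℝ := A.transpose * A with hG
  set Gc : Matrix (ZMod L) (ZMod L) ℂ := G.map Complex.ofReal with hGc
  set hf : ZMod L → ℂ := fun d => ∑ i : Fin N, ∑ u : ZMod L, (y i (d + u) : ℂ) * (y i u : ℂ)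
    with hhf
  have hGc2 : ∀ t s : ZMod L, Gc t s = hf (t - s) := by
    intro t s
    have h1 : Gc t s = ∑ i : Fin N, ∑ u : ZMod L, (y i (t + u) : ℂ) * (y i (s + u) : ℂ) := by
      simp only [hGc, Matrix.map_apply, hG, Matrix.mul_apply, Matrix.transpose_apply, hA,
        Matrix.of_apply, Fintype.sum_prod_type]
      push_cast
      rfl
    rw [h1, hhf]
    refine (Finset.sum_congr rfl fun i _ => ?_).symm
    rw [← Equiv.sum_comp (Equiv.addRight s) (fun u => (y i (t - s + u) : ℂ) * (y i u : ℂ))]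
    refine Finset.sum_congr rfl fun u _ => ?_
    simp only [Equiv.coe_addRight]
    have e1 : t - s + (u + s) = t + u := by ring
    have e2 : u + s = s + u := by ring
    rw [e1, e2]
  have hgneg : ∀ (x : ZMod L → ℝ) (k : ZMod L),
      (∑ j : ZMod L, (x j : ℂ) * ZMod.stdAddChar (j * k)) = Stmt2Aux.gg x (-k) := by
    intro x k
    rw [Stmt2Aux.gg]
    refine Finset.sum_congr rfl fun j _ => ?_
    congr 2
    ring
  set lamS : ZMod L → ℂ := fun k => ∑ i : Fin N, Stmt2Aux.gg (y i) (-k) * Stmt2Aux.gg (y i) k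
    with hlamSdef
  have hlamR : ∀ k, lam k = ∑ i : Fin N, Complex.normSq (Stmt2Aux.gg (y i) k) := by
    intro k
    rw [hlam k]
    simp only [Stmt2Aux.abs_dftR_sq]
    rw [← Finset.sum_div]
    field_simp
  have hlamC : ∀ k, (lam k : ℂ) = lamS k := by
    intro k
    rw [hlamR k, hlamSdef]
    push_cast
    refine Finset.sum_congr rfl fun i _ => ?_
    rw [← Complex.mul_conj, Stmt2Aux.conj_gg, hgneg]
    ring
  have hhat2 : ∀ c : ZMod L, ∑ d : ZMod L, hf d * ZMod.stdAddChar (d * c) = lamS c := by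
    intro c
    rw [hhf, hlamSdef]
    simp only [Finset.sum_mul]
    rw [Finset.sum_comm]
    refine Finset.sum_congr rfl fun i _ => ?_
    simp_rw [← Finset.sum_mul]
    rw [Stmt2Aux.hconv (y i) c, hgneg]
  have hlamSneg : ∀ k, lamS (-k) = lamS k := by
    intro k
    rw [hlamSdef]
    simp only [neg_neg]
    exact Finset.sum_congr rfl fun i _ => mul_comm _ _
  have heig : ∀ k : ZMod L,
      Gc.mulVec (fun t => (ZMod.stdAddChar (t * k) : ℂ))
        = lamS k • (fun t => (ZMod.stdAddChar (t * k) : ℂ)) := by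
    intro k
    funext t
    simp only [Matrix.mulVec, dotProduct, Pi.smul_apply, smul_eq_mul]
    simp only [hGc2]
    rw [← Equiv.sum_comp (Equiv.subLeft t)
      (fun s => hf (t - s) * ZMod.stdAddChar (s * k))]
    have hterm : ∀ d : ZMod L,
        hf (t - (t - d)) * ZMod.stdAddChar ((t - d) * k)
          = hf d * ZMod.stdAddChar (d * (-k)) * ZMod.stdAddChar (t * k) := by
      intro d
      rw [sub_sub_cancel]
      have e1 : ((t - d) * k : ZMod L) = d * (-k) + t * k := by ring
      rw [e1, AddChar.map_add_eq_mul]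
      ring
    simp only [Equiv.subLeft_apply]
    trans ∑ d : ZMod L, hf d * ZMod.stdAddChar (d * (-k)) * ZMod.stdAddChar (t * k)
    · exact Finset.sum_congr rfl fun d _ => hterm d
    · rw [← Finset.sum_mul, hhat2 (-k), hlamSneg]
  have hdft : ∀ (v : ZMod L → ℂ) (k : ZMod L),
      ∑ t : ZMod L, Gc.mulVec v t * ZMod.stdAddChar (t * k)
        = lamS k * ∑ s : ZMod L, v s * ZMod.stdAddChar (s * k) := by
    intro v k
    simp only [Matrix.mulVec, dotProduct, Finset.sum_mul]
    rw [Finset.sum_comm, Finset.mul_sum]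
    refine Finset.sum_congr rfl fun s _ => ?_
    simp only [hGc2]
    rw [← Equiv.sum_comp (Equiv.addRight s)
      (fun t => hf (t - s) * v s * ZMod.stdAddChar (t * k))]
    have hterm : ∀ d : ZMod L,
        hf (d + s - s) * v s * ZMod.stdAddChar ((d + s) * k)
          = hf d * ZMod.stdAddChar (d * k) * (v s * ZMod.stdAddChar (s * k)) := by
      intro d
      rw [add_sub_cancel_right]
      have e1 : ((d + s) * k : ZMod L) = d * k + s * k := by ring
      rw [e1, AddChar.map_add_eq_mul]
      ring
    simp only [Equiv.coe_addRight]
    trans ∑ d : ZMod L, hf d * ZMod.stdAddChar (d * k) * (v s * ZMod.stdAddChar (s * k))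
    · exact Finset.sum_congr rfl fun d _ => hterm d
    · rw [← Finset.sum_mul, hhat2 k]
  have hwnz : ∀ k : ZMod L, (fun t => (ZMod.stdAddChar (t * k) : ℂ)) ≠ 0 := by
    intro k h
    have h0 := congrFun h 0
    simp only [zero_mul, AddChar.map_zero_eq_one, Pi.zero_apply] at h0
    exact one_ne_zero h0
  have hspecC : ∀ mu : ℂ, mu ∈ spectrum ℂ Gc ↔ ∃ k, mu = lamS k := by
    intro mu
    rw [Stmt2Aux.spec_iff_eigen]
    constructor
    · rintro ⟨v, hv, hev⟩
      by_contra hcon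
      push_neg at hcon
      apply hv
      have hc : ∀ k : ZMod L, ∑ t : ZMod L, v t * ZMod.stdAddChar (t * k) = 0 := by
        intro k
        have h1 := hdft v k
        rw [hev] at h1
        have h2 : ∑ t : ZMod L, (mu • v) t * ZMod.stdAddChar (t * k)
            = mu * ∑ t : ZMod L, v t * ZMod.stdAddChar (t * k) := by
          rw [Finset.mul_sum]
          refine Finset.sum_congr rfl fun t _ => ?_
          simp only [Pi.smul_apply, smul_eq_mul]
          ring
        rw [h2] at h1
        by_contra hS
        exact hcon k (mul_right_cancel₀ hS h1)
      have hdft0 : ZMod.dft v = 0 := by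
        funext k
        rw [ZMod.dft_apply, Pi.zero_apply]
        have heq : ∑ j : ZMod L, ZMod.stdAddChar (-(j * k)) • v j
            = ∑ t : ZMod L, v t * ZMod.stdAddChar (t * (-k)) := by
          refine Finset.sum_congr rfl fun j _ => ?_
          rw [smul_eq_mul, mul_comm]
          congr 2
          ring
        rw [heq]
        exact hc (-k)
      exact (LinearEquiv.map_eq_zero_iff _).mp hdft0
    · rintro ⟨k, rfl⟩
      exact ⟨_, hwnz k, heig k⟩
  have hmain : ∀ mu : ℝ, mu ≠ 0 → (mu ∈ spectrum ℝ C ↔ ∃ k, mu = lam k) := by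
    intro mu hmu
    rw [hCA]
    constructor
    · intro h
      have h2 := Stmt2Aux.spec_swap_aux A A.transpose mu hmu h
      rw [← hG, Stmt2Aux.spec_ofReal, ← hGc] at h2
      obtain ⟨k, hk⟩ := (hspecC mu).mp h2
      exact ⟨k, Complex.ofReal_injective (by rw [hk, ← hlamC k])⟩
    · rintro ⟨k, rfl⟩
      have h2 : ((lam k : ℝ) : ℂ) ∈ spectrum ℂ Gc := (hspecC _).mpr ⟨k, hlamC k⟩
      rw [hGc] at h2
      rw [← Stmt2Aux.spec_ofReal, hG] at h2
      exact Stmt2Aux.spec_swap_aux A.transpose A (lam k) hmu h2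
  constructor
  · ext mu
    simp only [Set.mem_setOf_eq]
    constructor
    · rintro ⟨h0, hs⟩
      exact ⟨h0, (hmain mu h0).mp hs⟩
    · rintro ⟨h0, hs⟩
      exact ⟨h0, (hmain mu h0).mpr hs⟩
  · have htr : C.trace = ∑ i : Fin N, ∑ k : ZMod L, ∑ t : ZMod L, y i (t + k) * y i (t + k) := by
      show (∑ p : Fin N × ZMod L, C p p) = _
      rw [Fintype.sum_prod_type]
      exact Finset.sum_congr rfl fun i _ => Finset.sum_congr rfl fun k _ => hC i i k k
    have hrhs : ∑ k : ZMod L, lam k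
        = ∑ i : Fin N, ∑ k : ZMod L, Complex.normSq (Stmt2Aux.gg (y i) k) := by
      simp only [hlamR]
      rw [Finset.sum_comm]
    rw [htr, hrhs]
    refine Finset.sum_congr rfl fun i _ => ?_
    rw [Stmt2Aux.parseval (y i)]
    have hin : ∀ k : ZMod L, ∑ t : ZMod L, y i (t + k) * y i (t + k) = ∑ t : ZMod L, (y i t) ^ 2 := by
      intro k
      rw [← Equiv.sum_comp (Equiv.subRight k) (fun t => y i (t + k) * y i (t + k))]
      refine Finset.sum_congr rfl fun t _ => ?_
      simp only [Equiv.subRight_apply]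
      rw [sub_add_cancel]
      ring
    rw [Finset.sum_congr rfl fun k _ => hin k, Finset.sum_const, Finset.card_univ, ZMod.card,
      nsmul_eq_mul]
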